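/- Let $x \in G_\mathbb{C}$ satisfy $x \in G_\mathbb{R} c_{\beta_1} Q$ and $x \in G_\mathbb{R}\overline{Q}$. Then the set $x K_\mathbb{C} B \cap G_\mathbb{R} c_{\beta_1} B$ is nonempty. (Formula (3.1): $xS_1 \cap S'_8 \ne \emptyset$.) -/

import Mathlib

open Matrix

noncomputable section

/-- 4×4 complex matrices. -/
abbrev M4 : Type := Matrix (Fin 4) (Fin 4) ℂ

/-- The standard symplectic form matrix `J = [[0, -I₂],[I₂, 0]]`. -/
def Jmat : M4 := !![0, 0, -1, 0; 0, 0, 0, -1; 1, 0, 0, 0; 0, 1, 0, 0]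

/-- `G_ℂ = Sp(2,ℂ) = {g ∈ GL(4,ℂ) : ᵗg J g = J}`. -/
def GC : Set M4 := {g | IsUnit g ∧ gᵀ * Jmat * g = Jmat}

/-- `K_ℂ = {diag(g, ᵗg⁻¹) : g ∈ GL(2,ℂ)}`. -/
def KC : Set M4 :=
  {m | ∃ g : Matrix (Fin 2) (Fin 2) ℂ, IsUnit g ∧
    m = !![g 0 0, g 0 1, 0, 0;
           g 1 0, g 1 1, 0, 0;
           0, 0, (gᵀ)⁻¹ 0 0, (gᵀ)⁻¹ 0 1;
           0, 0, (gᵀ)⁻¹ 1 0, (gᵀ)⁻¹ 1 1]}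

/-- The Hermitian form of signature (2,2): `(w,z) = w̄₁z₁ + w̄₂z₂ - w̄₃z₃ - w̄₄z₄`. -/
def hermForm (w z : Fin 4 → ℂ) : ℂ :=
  star (w 0) * z 0 + star (w 1) * z 1 - star (w 2) * z 2 - star (w 3) * z 3

/-- `G_ℝ = G_ℂ ∩ U(2,2)`. -/
def GR : Set M4 :=
  {g | g ∈ GC ∧ ∀ w z : Fin 4 → ℂ, hermForm (g.mulVec w) (g.mulVec z) = hermForm w z}

/-- The standard basis vectors of `ℂ⁴`. -/
def stdVec (i : Fin 4) : Fin 4 → ℂ := Pi.single i 1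

/-- `U₊ = ℂe₁ ⊕ ℂe₂`. -/
def Uplus : Submodule ℂ (Fin 4 → ℂ) := Submodule.span ℂ {stdVec 0, stdVec 1}

/-- `U₋ = ℂe₃ ⊕ ℂe₄`. -/
def Uminus : Submodule ℂ (Fin 4 → ℂ) := Submodule.span ℂ {stdVec 2, stdVec 3}

/-- The line `ℂe₁`. -/
def line1 : Submodule ℂ (Fin 4 → ℂ) := Submodule.span ℂ {stdVec 0}

/-- `Q = {g ∈ G_ℂ : g U₊ = U₊}`. -/
def Qpar : Set M4 := {g | g ∈ GC ∧ Uplus.map g.mulVecLin = Uplus}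

/-- `Q̄ = {g ∈ G_ℂ : g U₋ = U₋}`. -/
def Qbar : Set M4 := {g | g ∈ GC ∧ Uminus.map g.mulVecLin = Uminus}

/-- The Borel subgroup `B = {g ∈ G_ℂ : g ℂe₁ = ℂe₁, g U₊ = U₊}`. -/
def Bor : Set M4 :=
  {g | g ∈ GC ∧ line1.map g.mulVecLin = line1 ∧ Uplus.map g.mulVecLin = Uplus}

/-- `t₁(s) = exp s(E₃₁ - E₁₃)`. -/
def t1 (s : ℝ) : M4 :=
  !![(Real.cos s : ℂ), 0, (-(Real.sin s) : ℂ), 0;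
     0, 1, 0, 0;
     ((Real.sin s : ℝ) : ℂ), 0, (Real.cos s : ℂ), 0;
     0, 0, 0, 1]

/-- `t₂(s) = exp s(E₄₂ - E₂₄)`. -/
def t2 (s : ℝ) : M4 :=
  !![1, 0, 0, 0;
     0, (Real.cos s : ℂ), 0, (-(Real.sin s) : ℂ);
     0, 0, 1, 0;
     0, ((Real.sin s : ℝ) : ℂ), 0, (Real.cos s : ℂ)]

def cb1 : M4 := t1 (Real.pi / 4)
def cb2 : M4 := t2 (Real.pi / 4)
def wb1 : M4 := t1 (Real.pi / 2)
def wb2 : M4 := t2 (Real.pi / 2)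

/-- `c_δ = (1/√2) · [[1,0,0,-1],[0,1,-1,0],[0,1,1,0],[1,0,0,1]]`. -/
def cdelta : M4 :=
  ((Real.sqrt 2 : ℂ))⁻¹ • !![1, 0, 0, -1; 0, 1, -1, 0; 0, 1, 1, 0; 1, 0, 0, 1]

/-- The double coset `A g C = {a g c : a ∈ A, c ∈ C}`. -/
def dc (A : Set M4) (g : M4) (C : Set M4) : Set M4 :=
  {m | ∃ a ∈ A, ∃ c ∈ C, m = a * g * c}

lemma mem_Uplus_iff (v : Fin 4 → ℂ) : v ∈ Uplus ↔ v 2 = 0 ∧ v 3 = 0 := by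
  rw [Uplus, Submodule.mem_span_pair]
  constructor
  · rintro ⟨a, b, rfl⟩
    constructor <;> simp [stdVec, Pi.single_apply]
  · rintro ⟨h2, h3⟩
    refine ⟨v 0, v 1, funext fun i => ?_⟩
    fin_cases i <;> simp [stdVec, Pi.single_apply, h2, h3]

lemma GC_one : (1 : M4) ∈ GC := ⟨isUnit_one, by simp⟩

lemma GC_mul {a b : M4} (ha : a ∈ GC) (hb : b ∈ GC) : a * b ∈ GC := by
  obtain ⟨ha1, ha2⟩ := ha; obtain ⟨hb1, hb2⟩ := hb
  refine ⟨ha1.mul hb1, ?_⟩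
  have : (a * b)ᵀ * Jmat * (a * b) = bᵀ * (aᵀ * Jmat * a) * b := by
    rw [Matrix.transpose_mul]; noncomm_ring
  rw [this, ha2, hb2]

lemma GC_inv {a : M4} (ha : a ∈ GC) : a⁻¹ ∈ GC := by
  obtain ⟨h1, h2⟩ := ha
  have hd : IsUnit a.det := (Matrix.isUnit_iff_isUnit_det a).mp h1
  have hdT : IsUnit aᵀ.det := by rwa [Matrix.det_transpose]
  have e2 : a * a⁻¹ = 1 := Matrix.mul_nonsing_inv _ hd
  refine ⟨(Matrix.isUnit_iff_isUnit_det _).mpr (Matrix.isUnit_det_of_left_inverse e2), ?_⟩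
  have e1 : (aᵀ)⁻¹ * aᵀ = 1 := Matrix.nonsing_inv_mul _ hdT
  calc (a⁻¹)ᵀ * Jmat * a⁻¹ = (aᵀ)⁻¹ * (aᵀ * Jmat * a) * a⁻¹ := by
        rw [h2, Matrix.transpose_nonsing_inv]
    _ = ((aᵀ)⁻¹ * aᵀ) * Jmat * (a * a⁻¹) := by noncomm_ring
    _ = Jmat := by rw [e1, e2, Matrix.one_mul, Matrix.mul_one]

lemma Qpar_mul {a b : M4} (ha : a ∈ Qpar) (hb : b ∈ Qpar) : a * b ∈ Qpar := by
  refine ⟨GC_mul ha.1 hb.1, ?_⟩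
  rw [Matrix.mulVecLin_mul, Submodule.map_comp, hb.2, ha.2]

lemma Qpar_inv {a : M4} (ha : a ∈ Qpar) : a⁻¹ ∈ Qpar := by
  refine ⟨GC_inv ha.1, ?_⟩
  have hd : IsUnit a.det := (Matrix.isUnit_iff_isUnit_det a).mp ha.1.1
  conv_lhs => rw [← ha.2]
  rw [← Submodule.map_comp, ← Matrix.mulVecLin_mul, Matrix.nonsing_inv_mul _ hd,
    Matrix.mulVecLin_one, Submodule.map_id]

lemma Bor_one : (1 : M4) ∈ Bor :=
  ⟨GC_one, by simp [Matrix.mulVecLin_one], by simp [Matrix.mulVecLin_one]⟩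

lemma Qpar_decomp {p : M4} (hp : p ∈ Qpar) : ∃ k ∈ KC, ∃ b ∈ Bor, p = k * b := by
  have hpu : IsUnit p := hp.1.1
  -- lower-left block of p vanishes
  have hmem : ∀ i : Fin 4, stdVec i ∈ ({stdVec 0, stdVec 1} : Set (Fin 4 → ℂ)) →
      p.mulVec (stdVec i) ∈ Uplus := by
    intro i hi
    rw [← hp.2]
    exact Submodule.mem_map_of_mem (Submodule.subset_span hi)
  have hc0 := (mem_Uplus_iff _).mp (hmem 0 (Or.inl rfl))
  have hc1 := (mem_Uplus_iff _).mp (hmem 1 (Or.inr rfl))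
  simp only [stdVec, Matrix.mulVec_single, mul_one, MulOpposite.op_one, one_smul, Matrix.col_apply] at hc0 hc1
  obtain ⟨z20, z30⟩ := hc0
  obtain ⟨z21, z31⟩ := hc1
  -- surjectivity onto Uplus: preimages of e1, e2
  have hsurj : ∀ i : Fin 4, stdVec i ∈ ({stdVec 0, stdVec 1} : Set (Fin 4 → ℂ)) →
      ∃ v : Fin 4 → ℂ, v 2 = 0 ∧ v 3 = 0 ∧ p.mulVec v = stdVec i := by
    intro i hi
    have : stdVec i ∈ Uplus.map p.mulVecLin := by
      rw [hp.2]; exact Submodule.subset_span hi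
    obtain ⟨v, hv, hveq⟩ := this
    obtain ⟨hv2, hv3⟩ := (mem_Uplus_iff _).mp hv
    exact ⟨v, hv2, hv3, hveq⟩
  obtain ⟨v, hv2, hv3, hveq⟩ := hsurj 0 (Or.inl rfl)
  obtain ⟨w, hw2, hw3, hweq⟩ := hsurj 1 (Or.inr rfl)
  -- extract scalar equations
  have Ev : ∀ i : Fin 4, p i 0 * v 0 + p i 1 * v 1 = stdVec 0 i := by
    intro i
    have := congrFun hveq i
    simpa [Matrix.mulVec, dotProduct, Fin.sum_univ_four, hv2, hv3] using this
  have Ew : ∀ i : Fin 4, p i 0 * w 0 + p i 1 * w 1 = stdVec 1 i := by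
    intro i
    have := congrFun hweq i
    simpa [Matrix.mulVec, dotProduct, Fin.sum_univ_four, hw2, hw3] using this
  set A : Matrix (Fin 2) (Fin 2) ℂ := !![p 0 0, p 0 1; p 1 0, p 1 1] with hA_def
  have hAC : A * !![v 0, w 0; v 1, w 1] = 1 := by
    ext i j
    fin_cases i <;> fin_cases j <;>
      simp [hA_def, Matrix.mul_apply, Fin.sum_univ_two, Matrix.one_apply]
    · simpa [stdVec] using Ev 0
    · simpa [stdVec] using Ew 0
    · simpa [stdVec] using Ev 1
    · simpa [stdVec] using Ew 1
  have hA : IsUnit A := (Matrix.isUnit_iff_isUnit_det _).mpr (Matrix.isUnit_det_of_right_inverse hAC)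
  have hAd : IsUnit A.det := (Matrix.isUnit_iff_isUnit_det A).mp hA
  have hATd : IsUnit (Aᵀ).det := by rwa [Matrix.det_transpose]
  -- scalar identities
  have hAA : A * A⁻¹ = 1 := Matrix.mul_nonsing_inv _ hAd
  have hAiA : A⁻¹ * A = 1 := Matrix.nonsing_inv_mul _ hAd
  have hTT : Aᵀ * (Aᵀ)⁻¹ = 1 := Matrix.mul_nonsing_inv _ hATd
  have hTTi : (Aᵀ)⁻¹ * Aᵀ = 1 := Matrix.nonsing_inv_mul _ hATd
  have q1 : ∀ i j : Fin 2, A i 0 * A⁻¹ 0 j + A i 1 * A⁻¹ 1 j = (1 : Matrix (Fin 2) (Fin 2) ℂ) i j := by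
    intro i j
    have := congrFun (congrFun hAA i) j
    simpa [Matrix.mul_apply, Fin.sum_univ_two] using this
  have q2 : ∀ i j : Fin 2, A⁻¹ i 0 * A 0 j + A⁻¹ i 1 * A 1 j = (1 : Matrix (Fin 2) (Fin 2) ℂ) i j := by
    intro i j
    have := congrFun (congrFun hAiA i) j
    simpa [Matrix.mul_apply, Fin.sum_univ_two] using this
  -- block description
  let e : Fin 4 ≃ Fin 2 ⊕ Fin 2 := (finSumFinEquiv (m := 2) (n := 2)).symm
  have e0 : e 0 = Sum.inl 0 := by decide
  have e1 : e 1 = Sum.inl 1 := by decide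
  have e2 : e 2 = Sum.inr 0 := by decide
  have e3 : e 3 = Sum.inr 1 := by decide
  set h : Matrix (Fin 2) (Fin 2) ℂ := (Aᵀ)⁻¹ with hh_def
  set k : M4 := !![A 0 0, A 0 1, 0, 0;
                   A 1 0, A 1 1, 0, 0;
                   0, 0, h 0 0, h 0 1;
                   0, 0, h 1 0, h 1 1] with hk_def
  set k' : M4 := !![A⁻¹ 0 0, A⁻¹ 0 1, 0, 0;
                    A⁻¹ 1 0, A⁻¹ 1 1, 0, 0;
                    0, 0, Aᵀ 0 0, Aᵀ 0 1;
                    0, 0, Aᵀ 1 0, Aᵀ 1 1] with hk'_def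
  have hkblk : k = (Matrix.fromBlocks A 0 0 h).submatrix e e := by
    ext i j
    fin_cases i <;> fin_cases j <;>
      simp [hk_def, Matrix.submatrix_apply, e0, e1, e2, e3, Matrix.fromBlocks, Matrix.vecHead, Matrix.vecTail, Function.comp]
  have hk'blk : k' = (Matrix.fromBlocks A⁻¹ 0 0 Aᵀ).submatrix e e := by
    ext i j
    fin_cases i <;> fin_cases j <;>
      simp [hk'_def, Matrix.submatrix_apply, e0, e1, e2, e3, Matrix.fromBlocks, Matrix.vecHead, Matrix.vecTail, Function.comp]
  have hJblk : Jmat = (Matrix.fromBlocks 0 (-1) 1 0).submatrix e e := by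
    ext i j
    fin_cases i <;> fin_cases j <;>
      simp [Jmat, Matrix.submatrix_apply, e0, e1, e2, e3, Matrix.fromBlocks, Matrix.vecHead, Matrix.vecTail, Function.comp,
        Matrix.one_apply]
  have hkk' : k * k' = 1 := by
    rw [hkblk, hk'blk, Matrix.submatrix_mul_equiv, Matrix.fromBlocks_multiply]
    simp [hAA, hTTi, Matrix.fromBlocks_one]
  have hk'k : k' * k = 1 := by
    rw [hkblk, hk'blk, Matrix.submatrix_mul_equiv, Matrix.fromBlocks_multiply]
    simp [hAiA, hTT, Matrix.fromBlocks_one]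
  have hhT : hᵀ = A⁻¹ := by
    rw [hh_def, ← Matrix.transpose_nonsing_inv, Matrix.transpose_transpose]
  have hkGC : k ∈ GC := by
    refine ⟨(Matrix.isUnit_iff_isUnit_det _).mpr (Matrix.isUnit_det_of_right_inverse hkk'), ?_⟩
    rw [hkblk, hJblk, Matrix.transpose_submatrix, Matrix.fromBlocks_transpose,
      Matrix.submatrix_mul_equiv, Matrix.submatrix_mul_equiv,
      Matrix.fromBlocks_multiply, Matrix.fromBlocks_multiply]
    simp [hhT, hAiA, hTT, hh_def, Matrix.mul_nonsing_inv _ hATd, Matrix.transpose_nonsing_inv, Matrix.nonsing_inv_mul _ hAd]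
  -- k belongs to KC
  have hkKC : k ∈ KC := ⟨A, hA, by rw [hk_def, hh_def]⟩
  -- k preserves Uplus
  have hkQ : k ∈ Qpar := by
    refine ⟨hkGC, le_antisymm ?_ ?_⟩
    · rw [Uplus, Submodule.map_span, Set.image_insert_eq, Set.image_singleton]
      refine Submodule.span_le.mpr ?_
      rintro y hy
      rcases hy with rfl | rfl <;>
        refine (mem_Uplus_iff _).mpr ?_ <;>
        constructor <;>
        simp [Matrix.mulVecLin_apply, stdVec, Matrix.mulVec_single, hk_def,
          Matrix.vecHead, Matrix.vecTail, Function.comp]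
    · rw [Uplus]
      refine Submodule.span_le.mpr ?_
      rintro y hy
      rcases hy with rfl | rfl
      · refine ⟨![A⁻¹ 0 0, A⁻¹ 1 0, 0, 0], (mem_Uplus_iff _).mpr ⟨rfl, rfl⟩, ?_⟩
        funext i
        fin_cases i <;>
          simp [Matrix.mulVecLin_apply, Matrix.mulVec, dotProduct,
            Fin.sum_univ_four, hk_def, stdVec, Pi.single_apply]
        · simpa using q1 0 0
        · simpa using q1 1 0
      · refine ⟨![A⁻¹ 0 1, A⁻¹ 1 1, 0, 0], (mem_Uplus_iff _).mpr ⟨rfl, rfl⟩, ?_⟩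
        funext i
        fin_cases i <;>
          simp [Matrix.mulVecLin_apply, Matrix.mulVec, dotProduct,
            Fin.sum_univ_four, hk_def, stdVec, Pi.single_apply]
        · simpa using q1 0 1
        · simpa using q1 1 1
  -- the unipotent-ish factor b
  set b : M4 := k' * p with hb_def
  have hkinv : k⁻¹ = k' := Matrix.inv_eq_right_inv hkk'
  have hbQ : b ∈ Qpar := Qpar_mul (hkinv ▸ Qpar_inv hkQ) hp
  have hpcol : p.mulVec (stdVec 0) = fun i => p i 0 := by
    funext i; simp [stdVec, Matrix.mulVec_single]
  have hbe1 : b.mulVec (stdVec 0) = stdVec 0 := by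
    rw [hb_def, ← Matrix.mulVec_mulVec, hpcol]
    funext i
    fin_cases i <;>
      simp [hk'_def, Matrix.mulVec, dotProduct, Fin.sum_univ_four,
        z20, z30, stdVec, Pi.single_apply]
    · simpa [hA_def] using q2 0 0
    · simpa [hA_def] using q2 1 0
  have hbl : line1.map b.mulVecLin = line1 := by
    rw [line1, Submodule.map_span, Set.image_singleton]
    simp [Matrix.mulVecLin_apply, hbe1]
  have hbBor : b ∈ Bor := ⟨hbQ.1, hbl, hbQ.2⟩
  exact ⟨k, hkKC, b, hbBor, by rw [hb_def, ← Matrix.mul_assoc, hkk', Matrix.one_mul]⟩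

/-- Formula (3.1): if `x ∈ G_ℝ c_{β₁} Q` and `x ∈ G_ℝ Q̄`, then
`x K_ℂ B ∩ G_ℝ c_{β₁} B ≠ ∅` (i.e. `xS₁ ∩ S'₈ ≠ ∅`). -/
theorem stmt_2 (x : M4) (hx1 : x ∈ dc GR cb1 Qpar) (hx2 : x ∈ dc GR 1 Qbar) :
    ((fun m => x * m) '' dc KC 1 Bor ∩ dc GR cb1 Bor).Nonempty := by
  obtain ⟨g, hg, q, hq, hxeq⟩ := hx1
  have hqd : IsUnit q.det := (Matrix.isUnit_iff_isUnit_det q).mp hq.1.1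
  obtain ⟨k, hk, b, hb, hdecomp⟩ := Qpar_decomp (Qpar_inv hq)
  refine ⟨g * cb1, ⟨q⁻¹, ⟨k, hk, b, hb, by rw [hdecomp, Matrix.mul_one]⟩, ?_⟩,
    ⟨g, hg, 1, Bor_one, by rw [Matrix.mul_one]⟩⟩
  show x * q⁻¹ = g * cb1
  rw [hxeq, Matrix.mul_assoc, Matrix.mul_nonsing_inv _ hqd, Matrix.mul_one]
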